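/- For every integer p ≥ 2, all positive integers n, r with r ≤ n, and every δ ≥ 0: setting m = ⌈(p−1)·n^{1/(p−1)}⌉, there exists a (p, δ, pδ)-error-correcting data structure for the inner product problem IP_{n,r} of length N = p · 2^{(p−1)·r·m} ≤ p · 2^{r(p−1)^2 ⌈n^{1/(p−1)}⌉}. -/

import Mathlib

/-- Hamming weight of a bit string. -/
def wt {n : ℕ} (y : Fin n → Bool) : ℕ := (Finset.univ.filter (fun i => y i = true)).card

/-- Inner product mod 2 of two bit strings, as an element of `ZMod 2`. -/
def ip {n : ℕ} (x y : Fin n → Bool) : ZMod 2 := ∑ i, if x i && y i then 1 else 0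

/-- The sequence of answers obtained by the (adaptive) decoder probing the string `y`
on query `q` with seed `s`: the `k`-th probe position may depend on the query, the seed,
and the previous `k` answers. -/
def runAns {N p : ℕ} {Q S : Type} (probe : (k : Fin p) → Q → S → (Fin k.val → Bool) → Fin N)
    (y : Fin N → Bool) (q : Q) (s : S) : (k : Fin p) → Bool
  | k => y (probe k q s (fun j => runAns probe y q s ⟨j.val, j.isLt.trans k.isLt⟩))
  termination_by k => k.val

/-- A `(p,δ,ε)`-error-correcting data structure of length `N` for `f : D → Q → A`:
an encoding `enc : D → {0,1}^N` together with a randomized decoder (seed set `Fin seeds`,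
adaptive probe-choice functions, and an output function) such that for every query `q`,
every data item `x`, and every `y ∈ {0,1}^N` within Hamming distance `δN` of `enc x`,
the decoder outputs `f x q` with probability at least `1 - ε` over a uniform seed. -/
structure ECDS (D Q A : Type) [DecidableEq A] (p N : ℕ) (δ ε : ℝ) (f : D → Q → A) where
  enc : D → (Fin N → Bool)
  seeds : ℕ
  seeds_pos : 0 < seeds
  probe : (k : Fin p) → Q → Fin seeds → (Fin k.val → Bool) → Fin N
  out : Q → Fin seeds → (Fin p → Bool) → A
  correct : ∀ (q : Q) (x : D) (y : Fin N → Bool),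
    (hammingDist y (enc x) : ℝ) ≤ δ * N →
    (1 - ε) * (seeds : ℝ) ≤
      ((Finset.univ.filter (fun s : Fin seeds =>
        out q s (runAns probe y q s) = f x q)).card : ℝ)


namespace IP8

open Polynomial Finset

/-! ### Polynomial helper lemmas -/

lemma natDegree_prod_linear_le {F : Type*} [Field F] {ι : Type*} (s : Finset ι) (a b : ι → F) :
    (∏ j ∈ s, (C (a j) * X + C (b j))).natDegree ≤ s.card := by
  refine (Polynomial.natDegree_prod_le _ _).trans ?_
  calc ∑ j ∈ s, (C (a j) * X + C (b j)).natDegree ≤ ∑ _j ∈ s, 1 := by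
        refine Finset.sum_le_sum fun j _ => ?_
        refine (natDegree_add_le _ _).trans ?_
        simp only [natDegree_C, max_le_iff]
        exact ⟨(natDegree_mul_le).trans (by simp), by simp⟩
    _ = s.card := by simp

lemma coeff_prod_linear {F : Type*} [Field F] {ι : Type*} (s : Finset ι) (a b : ι → F) :
    (∏ j ∈ s, (C (a j) * X + C (b j))).coeff s.card = ∏ j ∈ s, a j := by
  classical
  induction s using Finset.induction_on with
  | empty => simp
  | insert _ _ hx ih =>
    rename_i x s
    rw [Finset.prod_insert hx, Finset.prod_insert hx, Finset.card_insert_of_notMem hx]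
    rw [add_mul, coeff_add, mul_assoc, coeff_C_mul, mul_comm (X : F[X]), coeff_mul_X,
      coeff_C_mul, ih, coeff_eq_zero_of_natDegree_lt
        (lt_of_le_of_lt (natDegree_prod_linear_le s a b) (Nat.lt_succ_self _)), mul_zero, add_zero]

/-- Lagrange-interpolation identity for a sum of products of affine-linear forms. -/
lemma interpolate_multilinear {F : Type*} [Field F] {V A : Type*} [Fintype A] (d : ℕ)
    (t : Fin (d+1) ↪ F) (coef : A → F) (g : A → Fin d → V) (z y : V → F) :
    ∑ a : A, coef a * ∏ j : Fin d, z (g a j) =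
      ∑ k : Fin (d+1),
        (Lagrange.basis Finset.univ (fun k' => t k') k).coeff d *
          (∑ a : A, coef a * ∏ j : Fin d, (t k * z (g a j) + y (g a j))) := by
  classical
  set Q : F[X] :=
    ∑ a : A, C (coef a) * ∏ j : Fin d, (C (z (g a j)) * X + C (y (g a j))) with hQ
  have hcard : (Finset.univ : Finset (Fin d)).card = d := by simp
  have natdeg : Q.natDegree ≤ d := by
    refine (natDegree_sum_le _ _).trans ?_
    rw [Finset.fold_max_le]
    refine ⟨Nat.zero_le _, fun a _ => ?_⟩
    refine (natDegree_mul_le).trans ?_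
    simp only [natDegree_C, zero_add]
    exact le_trans (natDegree_prod_linear_le _ _ _) (le_of_eq hcard)
  have degQ : Q.degree < ((Finset.univ : Finset (Fin (d+1))).card : ℕ) := by
    refine lt_of_le_of_lt (degree_le_natDegree) ?_
    rw [Finset.card_univ, Fintype.card_fin]
    exact_mod_cast lt_of_le_of_lt natdeg (Nat.lt_succ_self d)
  have hinj : Set.InjOn (fun k' => t k') (Finset.univ : Finset (Fin (d+1))) :=
    fun a _ b _ h => t.injective h
  have interp := Lagrange.eq_interpolate (f := Q) hinj degQ
  have evalQ : ∀ τ : F, Q.eval τ = ∑ a : A, coef a * ∏ j : Fin d, (τ * z (g a j) + y (g a j)) := by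
    intro τ
    rw [hQ, eval_finset_sum]
    refine Finset.sum_congr rfl fun a _ => ?_
    rw [eval_mul, eval_C, eval_prod]
    refine congrArg _ (Finset.prod_congr rfl fun j _ => ?_)
    rw [eval_add, eval_mul, eval_C, eval_C, eval_X]; ring
  have coeffQ : Q.coeff d = ∑ a : A, coef a * ∏ j : Fin d, z (g a j) := by
    rw [hQ, finset_sum_coeff]
    refine Finset.sum_congr rfl fun a _ => ?_
    rw [coeff_C_mul]
    congr 1
    have := coeff_prod_linear (Finset.univ : Finset (Fin d)) (fun j => z (g a j)) (fun j => y (g a j))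
    rw [hcard] at this
    exact this
  calc ∑ a : A, coef a * ∏ j : Fin d, z (g a j) = Q.coeff d := coeffQ.symm
    _ = (Lagrange.interpolate Finset.univ (fun k' => t k') (fun k => Q.eval (t k))).coeff d := by
        rw [← interp]
    _ = _ := by
        rw [Lagrange.interpolate_apply, finset_sum_coeff]
        refine Finset.sum_congr rfl fun k _ => ?_
        rw [coeff_C_mul, evalQ]; ring

/-- A linear functional sending `1` to `1`. -/
lemma exists_coord (K F : Type*) [Field K] [Field F] [Algebra K F] :
    ∃ ψ : F →ₗ[K] K, ψ 1 = 1 := by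
  classical
  have h1 : LinearIndepOn K id ({(1 : F)} : Set F) :=
    (linearIndepOn_singleton_iff K).mpr one_ne_zero
  have hmem : (1 : F) ∈ h1.extend (Set.subset_univ _) :=
    h1.subset_extend _ rfl
  let bas := Module.Basis.extend h1
  refine ⟨bas.coord ⟨1, hmem⟩, ?_⟩
  have h2 : bas ⟨1, hmem⟩ = 1 := Module.Basis.extend_apply_self h1 _
  calc bas.coord ⟨1, hmem⟩ 1 = bas.coord ⟨1, hmem⟩ (bas ⟨1, hmem⟩) := by rw [h2]
    _ = 1 := by rw [Module.Basis.coord_apply, Module.Basis.repr_self, Finsupp.single_eq_same]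

/-! ### Arithmetic lemmas -/

lemma Nat.le_pow_iff_clog_le {b : ℕ} (hb : 1 < b) {x y : ℕ} : x ≤ b ^ y ↔ Nat.clog b x ≤ y :=
  (Nat.clog_le_iff_le_pow hb).symm

lemma two_mul_add_one_le_pow {k : ℕ} (hk : 3 ≤ k) : 2*k+1 ≤ 2^k := by
  induction k, hk using Nat.le_induction with
  | base => norm_num
  | succ k hk ih =>
    have h2 : 2 ≤ 2^k := Nat.one_lt_two_pow_iff.mpr (by omega)
    calc 2*(k+1)+1 = (2*k+1) + 2 := by ring
      _ ≤ 2^k + 2^k := by omega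
      _ = 2^(k+1) := by ring

lemma clog_le_self {d : ℕ} (hd : 1 ≤ d) : Nat.clog 2 (d+1) ≤ d :=
  (Nat.le_pow_iff_clog_le one_lt_two).mp (Nat.succ_le_of_lt (Nat.lt_two_pow_self))

lemma two_clog_le {d : ℕ} (hd : 3 ≤ d) (hd4 : d ≠ 4) : 2 * Nat.clog 2 (d+1) ≤ d + 1 := by
  rcases eq_or_lt_of_le hd with h3 | h5
  · subst h3
    have h4 : Nat.clog 2 (3+1) ≤ 2 := (Nat.le_pow_iff_clog_le one_lt_two).mp (by norm_num)
    omega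
  · have hd5 : 5 ≤ d := by omega
    set k := (d+1)/2 with hk
    have hdiv := Nat.div_add_mod (d+1) 2
    have hk3 : 3 ≤ k := by omega
    have hb : Nat.clog 2 (d+1) ≤ k := by
      rw [← Nat.le_pow_iff_clog_le one_lt_two]
      calc d + 1 ≤ 2*k+1 := by omega
        _ ≤ 2^k := two_mul_add_one_le_pow hk3
    omega

/-- The key arithmetic fact: a good mixed-radix factorization exists. -/
lemma exists_radix (d n : ℕ) (hd : 1 ≤ d) (hn : 1 ≤ n) :
    ∃ u : Fin d → ℕ,
      n ≤ ∏ j, u j ∧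
      Nat.clog 2 (d+1) * (∑ j, u j) ≤ d * ⌈(d:ℝ) * (n:ℝ) ^ ((1:ℝ)/(d:ℝ))⌉₊ := by
  classical
  set b := Nat.clog 2 (d+1) with hbdef
  set c : ℝ := (n:ℝ) ^ ((1:ℝ)/(d:ℝ)) with hcdef
  set m := ⌈(d:ℝ) * c⌉₊ with hmdef
  have hn1 : (1:ℝ) ≤ (n:ℝ) := by exact_mod_cast hn
  have hd0 : (0:ℝ) < (d:ℝ) := by positivity
  have hc1 : 1 ≤ c := Real.one_le_rpow hn1 (by positivity)
  have hc0 : 0 < c := lt_of_lt_of_le one_pos hc1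
  have hcd : c ^ d = (n:ℝ) := by
    rw [hcdef, ← Real.rpow_natCast ((n:ℝ) ^ ((1:ℝ)/(d:ℝ))) d, ← Real.rpow_mul (by positivity)]
    rw [one_div, inv_mul_cancel₀ (ne_of_gt hd0), Real.rpow_one]
  set s := ⌈c⌉₊ with hsdef
  have hs1 : 1 ≤ s := Nat.one_le_iff_ne_zero.mpr (by
    simp only [hsdef, ne_eq, Nat.ceil_eq_zero, not_le]; linarith)
  have hcs : c ≤ (s:ℝ) := Nat.le_ceil c
  have hsc : ((s:ℝ) - 1) < c := by
    have h := Nat.lt_ceil.mp (show s - 1 < ⌈c⌉₊ from by omega)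
    have : (((s:ℕ) - 1 : ℕ) : ℝ) = (s:ℝ) - 1 := by
      rw [Nat.cast_sub hs1]; norm_num
    linarith [this ▸ h]
  have hmc : (d:ℝ) * c ≤ (m:ℝ) := Nat.le_ceil _
  -- n ≤ s ^ d
  have hns : n ≤ s ^ d := by
    have : (n:ℝ) ≤ (s:ℝ)^d := by rw [← hcd]; exact pow_le_pow_left₀ (le_of_lt hc0) hcs d
    exact_mod_cast this
  -- uniform helper
  have uniform : b * s ≤ m → ∃ u : Fin d → ℕ,
      n ≤ ∏ j, u j ∧ b * (∑ j, u j) ≤ d * m := by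
    intro h
    refine ⟨fun _ => s, ?_, ?_⟩
    · simpa [Finset.prod_const, Finset.card_univ] using hns
    · simp only [Finset.sum_const, Finset.card_univ, Fintype.card_fin, smul_eq_mul]
      calc b * (d * s) = d * (b * s) := by ring
        _ ≤ d * m := Nat.mul_le_mul_left d h
  -- m > d*(s-1)
  have hml : d * (s-1) < m := by
    have : ((d * (s-1) : ℕ) : ℝ) < (d:ℝ) * c := by
      push_cast [Nat.cast_sub hs1]
      exact mul_lt_mul_of_pos_left hsc hd0
    exact_mod_cast lt_of_lt_of_le this hmc
  -- cases
  by_cases hd2 : d = 2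
  · -- sqrt construction
    subst hd2
    have hb2 : b = 2 := by
      have h1 : Nat.clog 2 (2+1) ≤ 2 := (Nat.le_pow_iff_clog_le one_lt_two).mp (by norm_num)
      have h2 : ¬ Nat.clog 2 (2+1) ≤ 1 := fun h =>
        absurd ((Nat.le_pow_iff_clog_le one_lt_two).mpr h) (by norm_num)
      omega
    have hs0 : 0 < s := hs1
    set t := (n + s - 1) / s with htdef
    have hst : n ≤ s * t := by
      have h := Nat.lt_div_mul_add (a := n + s - 1) hs0
      rw [← htdef] at h
      rw [mul_comm]
      omega
    have hsum : s + t ≤ m := by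
      by_cases hA : n + s ≤ s * s
      · have htls : t < s := by
          rw [htdef, Nat.div_lt_iff_lt_mul hs0]
          calc n + s - 1 < n + s := by omega
            _ ≤ s * s := hA
        have hm1 : 2 * (s - 1) < m := by simpa using hml
        omega
      · have htle : t ≤ s := by
          rw [htdef, Nat.div_le_iff_le_mul_add_pred hs0]
          have h := hns
          rw [pow_two] at h
          omega
        have hcl : (s:ℝ) - 1/2 < c := by
          have hnB : (s:ℝ) * s + 1 ≤ (n:ℝ) + s := by
            have : s * s + 1 ≤ n + s := by omega
            exact_mod_cast this
          have hc2 : c^2 = (n:ℝ) := by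
            have := hcd; norm_num at this ⊢; exact this
          nlinarith [hc0, hc2, hnB]
        have hm2s : 2 * s ≤ m := by
          have : ((2*s : ℕ) : ℝ) - 1 < (2:ℝ) * c := by push_cast; linarith
          have h2 : ((2*s : ℕ) : ℝ) - 1 < (m:ℝ) := by
            calc ((2*s:ℕ):ℝ) - 1 < (2:ℝ)*c := this
              _ ≤ (m:ℝ) := by exact_mod_cast hmc
          have : (2*s : ℕ) ≤ m := by
            by_contra hcon
            push_neg at hcon
            have : (m:ℝ) ≤ ((2*s:ℕ):ℝ) - 1 := by
              have : m + 1 ≤ 2*s := hcon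
              have := (Nat.cast_le (α := ℝ)).mpr this
              push_cast at this ⊢; linarith
            linarith
          exact this
        omega
    refine ⟨![s, t], ?_, ?_⟩
    · simpa [Fin.prod_univ_two] using hst
    · rw [hb2]
      simp only [Fin.sum_univ_two, Matrix.cons_val_zero, Matrix.cons_val_one, Matrix.head_cons]
      omega
  by_cases hs1' : s = 1
  · -- n = 1-ish: uniform with s = 1
    refine uniform ?_
    have hbd : b ≤ d := clog_le_self hd
    have hdm : d ≤ m := by
      have h0 : ((d:ℕ):ℝ) ≤ (d:ℝ) * c := by nlinarith
      have h1 := h0.trans hmc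
      exact_mod_cast h1
    have hbs : b * s = b := by rw [hs1', mul_one]
    omega
  have hs2 : 2 ≤ s := by omega
  by_cases hd4 : d = 4
  · subst hd4
    have hb3 : b = 3 := by
      have h1 : Nat.clog 2 (4+1) ≤ 3 := (Nat.le_pow_iff_clog_le one_lt_two).mp (by norm_num)
      have h2 : ¬ Nat.clog 2 (4+1) ≤ 2 := fun h =>
        absurd ((Nat.le_pow_iff_clog_le one_lt_two).mpr h) (by norm_num)
      omega
    by_cases hn2 : n = 2
    · subst hn2
      have hsum4 : ∑ j, (![2,1,1,1] : Fin 4 → ℕ) j = 5 := by decide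
      have hprod4 : (2:ℕ) ≤ ∏ j, (![2,1,1,1] : Fin 4 → ℕ) j := by decide
      refine ⟨![2,1,1,1], hprod4, ?_⟩
      have hm5 : 5 ≤ m := by
        have h1c : (1:ℝ) < c := by
          have h2s : (2:ℝ) ≤ (s:ℝ) := by exact_mod_cast hs2
          linarith [hsc]
        have h1 : (4:ℝ) < 4 * c := by linarith
        have h4m : (4:ℝ) < (m:ℝ) := lt_of_lt_of_le h1 hmc
        exact_mod_cast h4m
      rw [hb3, hsum4]
      omega
    · refine uniform ?_
      rw [hb3]
      rcases Nat.lt_or_ge s 3 with hs3 | hs3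
      · -- s = 2, n ≥ 3
        have hseq : s = 2 := by omega
        have h1c : (1:ℝ) < c := by
          have h2s : (2:ℝ) ≤ (s:ℝ) := by exact_mod_cast hs2
          linarith [hsc]
        have hn3 : 3 ≤ n := by
          have hgt : (1:ℝ) < (n:ℝ) := by
            rw [← hcd]
            exact one_lt_pow₀ h1c (by omega)
          have : 1 < n := by exact_mod_cast hgt
          omega
        have hm6 : 6 ≤ m := by
          have hc54 : (5:ℝ)/4 < c := by
            have h3 : (3:ℝ) ≤ (n:ℝ) := by exact_mod_cast hn3
            by_contra hcon
            push_neg at hcon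
            have h4 : c^4 ≤ (5/4:ℝ)^4 := pow_le_pow_left₀ (le_of_lt hc0) hcon 4
            rw [hcd] at h4
            norm_num at h4
            linarith
          have hmc' : (4:ℝ) * c ≤ (m:ℝ) := by exact_mod_cast hmc
          have h5 : (5:ℝ) < (m:ℝ) := by linarith
          have h5' : 5 < m := by exact_mod_cast h5
          omega
        omega
      · -- s ≥ 3 : m ≥ 4(s-1)+1 ≥ 3s
        have := hml
        omega
  -- remaining: d ≠ 2, d ≠ 4, s ≥ 2: d = 1 or (d ≥ 3 with 2b ≤ d+1)
  rcases Nat.lt_or_ge d 2 with hd1 | hd3'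
  · -- d = 1
    have hdeq : d = 1 := by omega
    subst hdeq
    refine uniform ?_
    have hb1 : b = 1 := by
      have h1 : Nat.clog 2 (1+1) ≤ 1 := (Nat.le_pow_iff_clog_le one_lt_two).mp (by norm_num)
      have h2 : ¬ Nat.clog 2 (1+1) ≤ 0 := fun h =>
        absurd ((Nat.le_pow_iff_clog_le one_lt_two).mpr h) (by norm_num)
      omega
    have hsm : s ≤ m := Nat.ceil_le_ceil (by norm_num : c ≤ ((1:ℕ):ℝ) * c)
    have hbs : b * s = s := by rw [hb1, one_mul]
    omega
  · have hd3 : 3 ≤ d := by omega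
    have h2b : 2 * b ≤ d + 1 := two_clog_le hd3 hd4
    refine uniform ?_
    -- b*s ≤ m from m ≥ d*(s-1)+1 and (d-b)*s ≥ d-1
    have hbd : b ≤ d := clog_le_self hd
    have key : (d - b) * 2 ≤ (d - b) * s := Nat.mul_le_mul_left _ hs2
    have expand : b * s + (d - b) * s = d * s := by
      rw [← Nat.add_mul]; congr 1; omega
    have expand2 : d * s = d * (s-1) + d := by
      have : s - 1 + 1 = s := by omega
      calc d * s = d * ((s-1)+1) := by rw [this]
        _ = d * (s-1) + d := by ring
    omega

lemma runAns_const {N p : ℕ} {Q S : Type} (posf : Fin p → Q → S → Fin N)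
    (y : Fin N → Bool) (q : Q) (s : S) (k : Fin p) :
    runAns (fun k q s _ => posf k q s) y q s k = y (posf k q s) := by
  rw [runAns]

variable {n r d : ℕ} {u : Fin d → ℕ} {F : Type} [Field F]

def bitF (x : Fin n → Bool) (i : Fin n) : F := if x i then 1 else 0

def Pf (ι : Fin n → ∀ j, Fin (u j)) (x : Fin n → Bool)
    (w : (Fin r × Σ j : Fin d, Fin (u j)) → F) : F :=
  ∑ a : Fin r × Fin n, bitF x a.2 * ∏ j : Fin d, w (a.1, ⟨j, ι a.2 j⟩)

def selq (r : ℕ) {n : ℕ} (q : Fin n → Bool) (l : Fin r) : Option (Fin n) :=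
  if h : (l : ℕ) < (Finset.univ.filter (fun i => q i = true)).card then
    some (((Finset.univ.filter (fun i => q i = true)).orderIsoOfFin rfl ⟨l, h⟩ : _) : Fin n)
  else none

def zq (r : ℕ) (ι : Fin n → ∀ j, Fin (u j)) (q : Fin n → Bool) :
    (Fin r × Σ j : Fin d, Fin (u j)) → F := fun v =>
  match selq r q v.1 with
  | none => 0
  | some i0 => if ι i0 v.2.1 = v.2.2 then (1:F) else 0

lemma zq_eval (hd : 0 < d) (ι : Fin n → ∀ j, Fin (u j)) (hι : Function.Injective ι)
    (q : Fin n → Bool) (hq : (Finset.univ.filter (fun i => q i = true)).card ≤ r)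
    (x : Fin n → Bool) :
    Pf ι x (zq (F := F) r ι q) =
      ∑ i ∈ Finset.univ.filter (fun i => q i = true), (bitF x i : F) := by
  classical
  set Sq := Finset.univ.filter (fun i => q i = true) with hSq
  haveI : Nonempty (Fin d) := ⟨⟨0, hd⟩⟩
  rw [Pf, Fintype.sum_prod_type]
  have hterm : ∀ l : Fin r, (∑ i : Fin n,
      bitF x i * ∏ j : Fin d, zq (F := F) r ι q (l, ⟨j, ι i j⟩)) =
      (match selq r q l with
       | none => (0:F)
       | some i0 => bitF x i0) := by
    intro l
    cases hsel : selq r q l with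
    | none =>
      refine Finset.sum_eq_zero fun i _ => ?_
      have h0 : ∏ j : Fin d, zq (F := F) r ι q (l, ⟨j, ι i j⟩) = 0 := by
        refine Finset.prod_eq_zero (Finset.mem_univ (Classical.arbitrary (Fin d))) ?_
        simp [zq, hsel]
      rw [h0, mul_zero]
    | some i0 =>
      have hprod : ∀ i : Fin n, ∏ j : Fin d, zq (F := F) r ι q (l, ⟨j, ι i j⟩) =
          if i = i0 then (1:F) else 0 := by
        intro i
        have hz : ∀ j : Fin d, zq (F := F) r ι q (l, ⟨j, ι i j⟩) =
            if ι i0 j = ι i j then (1:F) else 0 := by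
          intro j; simp [zq, hsel]
        rw [Finset.prod_congr rfl (fun j _ => hz j), Finset.prod_boole]
        congr 1
        simp only [eq_iff_iff]
        constructor
        · intro h
          exact (hι (funext fun j => h j (Finset.mem_univ j))).symm
        · rintro rfl; intro j _; rfl
      calc (∑ i : Fin n, bitF x i * ∏ j : Fin d, zq (F := F) r ι q (l, ⟨j, ι i j⟩))
          = ∑ i : Fin n, bitF x i * if i = i0 then (1:F) else 0 :=
            Finset.sum_congr rfl fun i _ => by rw [hprod i]
        _ = bitF x i0 := by
            rw [Finset.sum_eq_single i0] <;> simp +contextual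
  rw [Finset.sum_congr rfl (fun l _ => hterm l)]
  have hmatch : ∀ l : Fin r, (match selq r q l with
       | none => (0:F)
       | some i0 => bitF x i0) =
      if h : (l:ℕ) < Sq.card then bitF x ((Sq.orderIsoOfFin rfl ⟨l, h⟩ : _) : Fin n) else 0 := by
    intro l
    by_cases h : (l:ℕ) < Sq.card
    · rw [dif_pos h]
      have hs : selq r q l = some ((Sq.orderIsoOfFin rfl ⟨l, h⟩ : _) : Fin n) := by
        rw [selq]; exact dif_pos h
      rw [hs]
    · rw [dif_neg h]
      have hs : selq r q l = none := by rw [selq]; exact dif_neg h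
      rw [hs]
  rw [Finset.sum_congr rfl (fun l _ => hmatch l)]
  rw [Fin.sum_univ_eq_sum_range
    (fun lv => if h : lv < Sq.card then bitF x ((Sq.orderIsoOfFin rfl ⟨lv, h⟩ : _) : Fin n) else 0)]
  rw [← Finset.sum_range_add_sum_Ico _ hq]
  have hzero : (∑ lv ∈ Finset.Ico Sq.card r,
      if h : lv < Sq.card then bitF (F := F) x ((Sq.orderIsoOfFin rfl ⟨lv, h⟩ : _) : Fin n)
      else 0) = 0 :=
    Finset.sum_eq_zero fun lv hlv => dif_neg (Nat.not_lt.mpr (Finset.mem_Ico.mp hlv).1)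
  rw [hzero, add_zero, Finset.sum_range]
  have hdpos : ∀ i : Fin Sq.card,
      (if h : (i:ℕ) < Sq.card then bitF x ((Sq.orderIsoOfFin rfl ⟨i, h⟩ : _) : Fin n) else 0)
        = bitF (F := F) x ((Sq.orderIsoOfFin rfl i : _) : Fin n) := by
    intro i; rw [dif_pos i.isLt]
  rw [Finset.sum_congr rfl (fun i _ => hdpos i)]
  calc ∑ i : Fin Sq.card, bitF (F := F) x ((Sq.orderIsoOfFin rfl i : _) : Fin n)
      = ∑ i : {y // y ∈ Sq}, bitF (F := F) x i :=
        Equiv.sum_comp (Sq.orderIsoOfFin rfl).toEquiv (fun (i : {y // y ∈ Sq}) => bitF (F := F) x i)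
    _ = ∑ i ∈ Sq, bitF (F := F) x i := Finset.sum_coe_sort Sq (fun i => bitF (F := F) x i)


lemma key_alg (t : Fin (d+1) ↪ F) (ι : Fin n → ∀ j, Fin (u j)) (x : Fin n → Bool)
    (z y : (Fin r × Σ j : Fin d, Fin (u j)) → F) :
    Pf ι x z = ∑ k : Fin (d+1),
      (Lagrange.basis Finset.univ (fun k' => t k') k).coeff d *
        Pf ι x (fun v => t k * z v + y v) := by
  have h := interpolate_multilinear (A := Fin r × Fin n) d t (fun a => bitF x a.2)
      (fun a j => (a.1, ⟨j, ι a.2 j⟩)) z y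
  simpa only [Pf] using h


lemma psi_ip [Module (ZMod 2) F] (ψ : F →ₗ[ZMod 2] ZMod 2) (hψ : ψ 1 = 1)
    (x q : Fin n → Bool) :
    ψ (∑ i ∈ Finset.univ.filter (fun i => q i = true), (bitF x i : F)) =
      ∑ i : Fin n, (if x i && q i then (1 : ZMod 2) else 0) := by
  rw [map_sum]
  have h1 : ∀ i : Fin n, ψ (bitF x i) = (if x i then (1 : ZMod 2) else 0) := by
    intro i
    by_cases hx : x i <;> simp [bitF, hx, hψ]
  rw [Finset.sum_congr rfl (fun i _ => h1 i)]
  rw [Finset.sum_filter]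
  refine Finset.sum_congr rfl fun i _ => ?_
  by_cases hq : q i = true
  · simp [hq]
  · have hq' : q i = false := by
      cases hqi : q i
      · rfl
      · exact absurd hqi hq
    simp [hq']


lemma ite_decide (e : ZMod 2) : (if (decide (e = 1)) = true then (1 : ZMod 2) else 0) = e := by
  revert e; decide

set_option maxHeartbeats 1000000 in
lemma ecds_core (n r d L : ℕ) (hn : 0 < n) (hr : 0 < r) (hd : 0 < d)
    (u : Fin d → ℕ) (hu : n ≤ ∏ j, u j)
    (hL : Nat.clog 2 (d+1) * (r * ∑ j, u j) ≤ L)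
    (F : Type) [Field F] [Fintype F] [Algebra (ZMod 2) F]
    (hcardF : Fintype.card F = 2 ^ Nat.clog 2 (d+1))
    (δ : ℝ) (hδ : 0 ≤ δ) :
    Nonempty (ECDS (Fin n → Bool) {y : Fin n → Bool // wt y ≤ r} (ZMod 2) (d+1)
      ((d+1) * 2^L) δ (((d+1) : ℝ) * δ) (fun x q => ip x q.val)) := by
  classical
  set b := Nat.clog 2 (d+1) with hbdef
  -- the coordinate functional
  obtain ⟨ψ, hψ⟩ := exists_coord (ZMod 2) F
  -- nodes
  obtain ⟨t⟩ : Nonempty (Fin (d+1) ↪ F) := by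
    refine Function.Embedding.nonempty_of_card_le ?_
    rw [Fintype.card_fin, hcardF]
    exact Nat.le_pow_clog one_lt_two _
  -- coordinate injection
  obtain ⟨ι⟩ : Nonempty (Fin n ↪ (∀ j, Fin (u j))) := by
    refine Function.Embedding.nonempty_of_card_le ?_
    rw [Fintype.card_fin, Fintype.card_pi]
    simpa using hu
  -- cardinalities
  have cardV : Fintype.card (Fin r × Σ j : Fin d, Fin (u j)) = r * ∑ j, u j := by
    simp [Fintype.card_sigma]
  have hbV : b * Fintype.card (Fin r × Σ j : Fin d, Fin (u j)) ≤ L := by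
    rw [cardV]; exact hL
  have cardPt : Fintype.card ((Fin r × Σ j : Fin d, Fin (u j)) → F) =
      2 ^ (b * Fintype.card (Fin r × Σ j : Fin d, Fin (u j))) := by
    rw [Fintype.card_fun, hcardF, ← pow_mul]
  have cardJ : Fintype.card (((Fin r × Σ j : Fin d, Fin (u j)) → F) ×
      Fin (2 ^ (L - b * Fintype.card (Fin r × Σ j : Fin d, Fin (u j))))) = 2 ^ L := by
    rw [Fintype.card_prod, cardPt, Fintype.card_fin, ← pow_add]
    congr 1
    omega
  set J := ((Fin r × Σ j : Fin d, Fin (u j)) → F) ×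
      Fin (2 ^ (L - b * Fintype.card (Fin r × Σ j : Fin d, Fin (u j)))) with hJ
  have eS : Fin (2^L) ≃ J := (Fintype.equivFinOfCardEq cardJ).symm
  have ePos : (Fin (d+1) × J) ≃ Fin ((d+1) * 2^L) := by
    refine Fintype.equivFinOfCardEq ?_
    rw [Fintype.card_prod, Fintype.card_fin, cardJ]
  -- Lagrange coefficients
  set cc : Fin (d+1) → F := fun k =>
    (Lagrange.basis Finset.univ (fun k' => t k') k).coeff d with hcc
  -- probe positions
  set posf : Fin (d+1) → {y : Fin n → Bool // wt y ≤ r} → Fin (2^L) → Fin ((d+1) * 2^L) :=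
    fun k q s => ePos (k, ((fun v => t k * zq r ι q.val v + (eS s).1 v), (eS s).2)) with hposf
  -- the encoding
  set enc : (Fin n → Bool) → Fin ((d+1) * 2^L) → Bool := fun x pos =>
    decide (ψ (cc (ePos.symm pos).1 * Pf ι x (ePos.symm pos).2.1) = 1) with henc
  refine ⟨{
    enc := enc
    seeds := 2^L
    seeds_pos := Nat.pow_pos (by norm_num)
    probe := fun k q s _ => posf k q s
    out := fun q s a => ∑ k : Fin (d+1), (if a k = true then (1 : ZMod 2) else 0)
    correct := ?_ }⟩
  intro q x y hy
  have hqcard : (Finset.univ.filter (fun i => q.val i = true)).card ≤ r := q.2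
  -- 1. good seeds answer correctly
  have hgood : ∀ s : Fin (2^L), (∀ k, y (posf k q s) = enc x (posf k q s)) →
      (∑ k : Fin (d+1),
        (if (runAns (fun k q s _ => posf k q s) y q s) k = true then (1:ZMod 2) else 0))
        = ip x q.val := by
    intro s hs
    have h1 : ∀ k, (runAns (fun k q s _ => posf k q s) y q s) k = y (posf k q s) :=
      fun k => runAns_const (fun k q s => posf k q s) y q s k
    have h2 : ∀ k, enc x (posf k q s) =
        decide (ψ (cc k * Pf ι x (fun v => t k * zq r ι q.val v + (eS s).1 v)) = 1) := by
      intro k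
      rw [henc, hposf]
      simp only [Equiv.symm_apply_apply]
    calc (∑ k : Fin (d+1),
        (if (runAns (fun k q s _ => posf k q s) y q s) k = true then (1:ZMod 2) else 0))
        = ∑ k : Fin (d+1),
            ψ (cc k * Pf ι x (fun v => t k * zq r ι q.val v + (eS s).1 v)) := by
          refine Finset.sum_congr rfl fun k _ => ?_
          rw [h1 k, hs k, h2 k, ite_decide]
      _ = ψ (∑ k : Fin (d+1),
            cc k * Pf ι x (fun v => t k * zq r ι q.val v + (eS s).1 v)) :=
          (map_sum ψ _ _).symm
      _ = ψ (Pf ι x (zq r ι q.val)) := by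
          rw [← key_alg t (fun i => ι i) x (zq r ι q.val) (eS s).1]
      _ = ψ (∑ i ∈ Finset.univ.filter (fun i => q.val i = true), (bitF x i : F)) := by
          rw [zq_eval hd (fun i => ι i) ι.injective q.val hqcard x]
      _ = ip x q.val := psi_ip ψ hψ x q.val
  -- 2. counting
  set Epos := Finset.univ.filter (fun pos : Fin ((d+1)*2^L) => y pos ≠ enc x pos) with hEpos
  have hham : hammingDist y (enc x) = Epos.card := rfl
  set Badk : Fin (d+1) → Finset (Fin (2^L)) := fun k =>
    Finset.univ.filter (fun s => y (posf k q s) ≠ enc x (posf k q s)) with hBadk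
  set Bad : Finset (Fin (2^L)) :=
    Finset.univ.filter (fun s => ¬ ∀ k, y (posf k q s) = enc x (posf k q s)) with hBad
  have hpinj : ∀ k, Function.Injective (fun s => posf k q s) := by
    intro k s s' h
    have h2 := ePos.injective h
    have h3 := congrArg Prod.snd h2
    simp only at h3
    have hf := congrArg Prod.fst h3
    have hp2 := congrArg Prod.snd h3
    simp only at hf hp2
    have hfe : (eS s).1 = (eS s').1 := by
      funext v
      exact add_left_cancel (congrFun hf v)
    exact eS.injective (Prod.ext hfe hp2)
  have himg : ∀ k, (Badk k).image (fun s => posf k q s) ⊆ Epos := by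
    intro k pos hpos
    obtain ⟨s, hs, rfl⟩ := Finset.mem_image.mp hpos
    rw [hEpos, Finset.mem_filter]
    exact ⟨Finset.mem_univ _, (Finset.mem_filter.mp hs).2⟩
  have hdisj : (↑(Finset.univ : Finset (Fin (d+1))) : Set (Fin (d+1))).PairwiseDisjoint
      (fun k => (Badk k).image (fun s => posf k q s)) := by
    intro k _ k' _ hkk'
    refine Finset.disjoint_left.mpr fun pos h1 h2 => ?_
    obtain ⟨s, _, hs⟩ := Finset.mem_image.mp h1
    obtain ⟨s', _, hs'⟩ := Finset.mem_image.mp h2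
    apply hkk'
    have := hs.trans hs'.symm
    have h4 := congrArg (fun z => (ePos.symm z).1) this
    simpa [hposf] using h4
  have hcount : Bad.card ≤ Epos.card := by
    calc Bad.card ≤ (Finset.univ.biUnion Badk).card := by
          refine Finset.card_le_card fun s hs => ?_
          rw [Finset.mem_biUnion]
          rw [hBad, Finset.mem_filter] at hs
          push_neg at hs
          obtain ⟨k, hk⟩ := hs.2
          exact ⟨k, Finset.mem_univ _, by rw [hBadk, Finset.mem_filter]; exact ⟨Finset.mem_univ _, hk⟩⟩
      _ ≤ ∑ k, (Badk k).card := Finset.card_biUnion_le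
      _ = ∑ k, ((Badk k).image (fun s => posf k q s)).card := by
          refine Finset.sum_congr rfl fun k _ => ?_
          exact (Finset.card_image_of_injective _ (hpinj k)).symm
      _ = (Finset.univ.biUnion (fun k => (Badk k).image (fun s => posf k q s))).card :=
          (Finset.card_biUnion hdisj).symm
      _ ≤ Epos.card := Finset.card_le_card (Finset.biUnion_subset.mpr fun k _ => himg k)
  -- 3. conclude
  have hsubset : Finset.univ.filter (fun s => ∀ k, y (posf k q s) = enc x (posf k q s)) ⊆
      Finset.univ.filter (fun s : Fin (2^L) =>
        (∑ k : Fin (d+1),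
          (if (runAns (fun k q s _ => posf k q s) y q s) k = true then (1:ZMod 2) else 0))
          = ip x q.val) := by
    intro s hs
    rw [Finset.mem_filter] at hs ⊢
    exact ⟨Finset.mem_univ _, hgood s hs.2⟩
  have hTcard := Finset.card_le_card hsubset
  have hEreal : (Epos.card : ℝ) ≤ δ * ((d+1) * 2^L) := by
    rw [← hham]
    calc (hammingDist y (enc x) : ℝ) ≤ δ * ((((d+1) * 2^L : ℕ)) : ℝ) := hy
      _ = δ * ((d+1) * 2^L) := by push_cast; ring
  have hcard2 : ((2:ℝ))^L - Epos.card ≤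
      ((Finset.univ.filter (fun s : Fin (2^L) =>
        (∑ k : Fin (d+1),
          (if (runAns (fun k q s _ => posf k q s) y q s) k = true then (1:ZMod 2) else 0))
          = ip x q.val)).card : ℝ) := by
    have hGsub : (Finset.univ : Finset (Fin (2^L))) \ Bad ⊆
        Finset.univ.filter (fun s => ∀ k, y (posf k q s) = enc x (posf k q s)) := by
      intro s hs
      rw [Finset.mem_sdiff] at hs
      rw [Finset.mem_filter]
      refine ⟨Finset.mem_univ _, ?_⟩
      by_contra hcon
      exact hs.2 (by rw [hBad, Finset.mem_filter]; exact ⟨Finset.mem_univ _, hcon⟩)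
    have hG : 2^L - Bad.card ≤ (Finset.univ.filter
        (fun s => ∀ k, y (posf k q s) = enc x (posf k q s))).card := by
      have h6 := Finset.card_le_card hGsub
      rw [Finset.card_sdiff_of_subset (Finset.subset_univ _), Finset.card_univ, Fintype.card_fin] at h6
      exact h6
    have := le_trans hG hTcard
    have hc : (2^L : ℕ) - Bad.card ≥ 2^L - Epos.card := by omega
    have h5 : (2^L : ℕ) - Epos.card ≤ (Finset.univ.filter (fun s : Fin (2^L) =>
        (∑ k : Fin (d+1),
          (if (runAns (fun k q s _ => posf k q s) y q s) k = true then (1:ZMod 2) else 0))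
          = ip x q.val)).card := by omega
    calc ((2:ℝ))^L - Epos.card ≤ (((2^L : ℕ) - Epos.card : ℕ) : ℝ) := by
          rcases Nat.le_total Epos.card (2^L) with hle | hle
          · rw [Nat.cast_sub hle]; push_cast; ring_nf; rfl
          · have : ((2^L : ℕ) : ℝ) ≤ (Epos.card : ℝ) := by exact_mod_cast hle
            have h0 : (((2^L : ℕ) - Epos.card : ℕ) : ℝ) = ((0:ℕ):ℝ) := by
              congr 1; omega
            push_cast at this h0 ⊢
            linarith
      _ ≤ _ := by exact_mod_cast h5
  have hfinal : (1 - ((d:ℝ) + 1) * δ) * ((2:ℝ)^L) ≤ ((2:ℝ))^L - Epos.card := by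
    have hexp : (1 - ((d:ℝ) + 1) * δ) * ((2:ℝ)^L)
        = (2:ℝ)^L - δ * ((d+1) * 2^L) := by push_cast; ring
    rw [hexp]
    linarith
  calc (1 - ((d:ℝ) + 1) * δ) * (((2^L : ℕ)) : ℝ)
      = (1 - ((d:ℝ) + 1) * δ) * ((2:ℝ)^L) := by push_cast; ring
    _ ≤ ((2:ℝ))^L - Epos.card := hfinal
    _ ≤ _ := hcard2



lemma ecds_core' (n r d L : ℕ) (hn : 0 < n) (hr : 0 < r) (hd : 0 < d)
    (u : Fin d → ℕ) (hu : n ≤ ∏ j, u j)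
    (hL : Nat.clog 2 (d+1) * (r * ∑ j, u j) ≤ L)
    (δ : ℝ) (hδ : 0 ≤ δ) :
    Nonempty (ECDS (Fin n → Bool) {y : Fin n → Bool // wt y ≤ r} (ZMod 2) (d+1)
      ((d+1) * 2^L) δ (((d+1) : ℝ) * δ) (fun x q => ip x q.val)) := by
  haveI : Fact (Nat.Prime 2) := ⟨Nat.prime_two⟩
  haveI : Fintype (GaloisField 2 (Nat.clog 2 (d+1))) := Fintype.ofFinite _
  refine ecds_core n r d L hn hr hd u hu hL (GaloisField 2 (Nat.clog 2 (d+1))) ?_ δ hδ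
  have hb0 : Nat.clog 2 (d+1) ≠ 0 := by
    have := Nat.clog_pos one_lt_two (show 1 < d + 1 by omega)
    omega
  rw [← Nat.card_eq_fintype_card]
  exact GaloisField.card 2 _ hb0

end IP8

/-- For every `p ≥ 2`, `r ≤ n` and `δ ≥ 0`: with
`m = ⌈(p−1)·n^{1/(p−1)}⌉`, there is a `(p,δ,pδ)`-error-correcting data structure for the
inner product problem `IP_{n,r}` of length `N = p·2^{(p−1)·r·m}`, and moreover
`N ≤ p·2^{r·(p−1)²·⌈n^{1/(p−1)}⌉}`. -/
theorem ip_polynomial_ecds_exists (n r p : ℕ) (hp : 2 ≤ p) (hn : 0 < n) (hr : 0 < r)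
    (hrn : r ≤ n) (δ : ℝ) (hδ : 0 ≤ δ) :
    ∃ m N : ℕ,
      m = ⌈((p : ℝ) - 1) * (n : ℝ) ^ ((1 : ℝ) / ((p : ℝ) - 1))⌉₊ ∧
      N = p * 2 ^ ((p - 1) * r * m) ∧
      N ≤ p * 2 ^ (r * (p - 1) ^ 2 * ⌈(n : ℝ) ^ ((1 : ℝ) / ((p : ℝ) - 1))⌉₊) ∧
      Nonempty (ECDS (Fin n → Bool) {y : Fin n → Bool // wt y ≤ r} (ZMod 2) p N δ ((p : ℝ) * δ)
        (fun x q => ip x q.val)) := by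
  have hd0 : 0 < p - 1 := by omega
  have hpc : ((p - 1 : ℕ) : ℝ) = (p:ℝ) - 1 := by
    have h1 : (1:ℕ) ≤ p := by omega
    push_cast [Nat.cast_sub h1]
    ring
  set c : ℝ := (n : ℝ) ^ ((1:ℝ)/((p:ℝ)-1)) with hcdef
  set m := ⌈((p : ℝ) - 1) * c⌉₊ with hmdef
  refine ⟨m, p * 2 ^ ((p-1)*r*m), rfl, rfl, ?_, ?_⟩
  · -- length bound
    have hp1 : (0:ℝ) ≤ (p:ℝ) - 1 := by
      have : (2:ℝ) ≤ (p:ℝ) := by exact_mod_cast hp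
      linarith
    have hm : m ≤ (p-1) * ⌈c⌉₊ := by
      rw [hmdef]
      refine Nat.ceil_le.mpr ?_
      calc ((p:ℝ)-1) * c ≤ ((p:ℝ)-1) * (⌈c⌉₊ : ℝ) :=
            mul_le_mul_of_nonneg_left (Nat.le_ceil c) hp1
        _ = (((p-1) * ⌈c⌉₊ : ℕ) : ℝ) := by push_cast [hpc]; ring
    refine Nat.mul_le_mul_left p (Nat.pow_le_pow_right (by norm_num) ?_)
    calc (p-1)*r*m ≤ (p-1)*r*((p-1)*⌈c⌉₊) := Nat.mul_le_mul_left _ hm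
      _ = r * (p-1)^2 * ⌈c⌉₊ := by ring
  · -- existence of the data structure
    obtain ⟨u, hu, hradix⟩ := IP8.exists_radix (p-1) n hd0 hn
    have hmeq : ⌈((p-1:ℕ):ℝ) * (n:ℝ) ^ ((1:ℝ)/((p-1:ℕ):ℝ))⌉₊ = m := by
      rw [hmdef, hcdef, hpc]
    rw [hmeq] at hradix
    have hL : Nat.clog 2 ((p-1)+1) * (r * ∑ j, u j) ≤ (p-1)*r*m := by
      calc Nat.clog 2 ((p-1)+1) * (r * ∑ j, u j)
          = r * (Nat.clog 2 ((p-1)+1) * ∑ j, u j) := by ring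
        _ ≤ r * ((p-1) * m) := Nat.mul_le_mul_left r hradix
        _ = (p-1)*r*m := by ring
    have hcore := IP8.ecds_core' n r (p-1) ((p-1)*r*m) hn hr hd0 u hu hL δ hδ
    have hd1 : (p - 1) + 1 = p := by omega
    have hcast : (((p-1:ℕ)) : ℝ) + 1 = (p:ℝ) := by rw [hpc]; ring
    rw [hcast, hd1] at hcore
    exact hcore
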